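/- In a Markov chain on a finite (or countable) state space with an absorbing state v_err, if every state reachable from the initial state can reach v_err (i.e., Post*(v₀) ⊆ Pre*(v_err)) and the state space reachable from v₀ is finite, then the probability of eventually reaching v_err from v₀ is 1. -/
import Mathlib


open scoped ENNReal

/-- `reachProb P verr n v` is the probability, in the Markov chain with transition
function `P`, of reaching `verr` from `v` within `n` steps.  The probability of the
event `◇ verr` of eventually visiting `verr` is the supremum of these quantities. -/
noncomputable def reachProb {V : Type*} [DecidableEq V] (P : V → PMF V) (verr : V) :
    ℕ → V → ℝ≥0∞
  | 0, v => if v = verr then 1 else 0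
  | n + 1, v => if v = verr then 1 else ∑' v', P v v' * reachProb P verr n v'

/-- Probability of NOT reaching `verr` within `n` steps. -/
noncomputable def failProb {V : Type*} [DecidableEq V] (P : V → PMF V) (verr : V) :
    ℕ → V → ℝ≥0∞
  | 0, v => if v = verr then 0 else 1
  | n + 1, v => if v = verr then 0 else ∑' v', P v v' * failProb P verr n v'

lemma failProb_verr {V : Type*} [DecidableEq V] (P : V → PMF V) (verr : V) (n : ℕ) :
    failProb P verr n verr = 0 := by
  cases n <;> simp [failProb]

lemma reach_add_fail {V : Type*} [DecidableEq V] (P : V → PMF V) (verr : V) :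
    ∀ n v, reachProb P verr n v + failProb P verr n v = 1 := by
  intro n
  induction n with
  | zero =>
    intro v
    by_cases h : v = verr <;> simp [reachProb, failProb, h]
  | succ n ih =>
    intro v
    by_cases h : v = verr
    · simp [reachProb, failProb, h]
    · simp only [reachProb, failProb, if_neg h]
      rw [← ENNReal.tsum_add]
      have : ∀ v', P v v' * reachProb P verr n v' + P v v' * failProb P verr n v'
          = P v v' := by
        intro v'
        rw [← mul_add, ih v', mul_one]
      simp only [this]
      exact (P v).tsum_coe

lemma reachProb_le_one {V : Type*} [DecidableEq V] (P : V → PMF V) (verr : V)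
    (n : ℕ) (v : V) : reachProb P verr n v ≤ 1 := by
  calc reachProb P verr n v ≤ reachProb P verr n v + failProb P verr n v := le_self_add
  _ = 1 := reach_add_fail P verr n v

lemma failProb_le_one {V : Type*} [DecidableEq V] (P : V → PMF V) (verr : V)
    (n : ℕ) (v : V) : failProb P verr n v ≤ 1 := by
  calc failProb P verr n v ≤ reachProb P verr n v + failProb P verr n v := le_add_self
  _ = 1 := reach_add_fail P verr n v

lemma reachProb_mono {V : Type*} [DecidableEq V] (P : V → PMF V) (verr : V) :
    ∀ n v, reachProb P verr n v ≤ reachProb P verr (n + 1) v := by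
  intro n
  induction n with
  | zero =>
    intro v
    by_cases h : v = verr <;> simp [reachProb, h]
  | succ n ih =>
    intro v
    by_cases h : v = verr
    · simp [reachProb, h]
    · simp only [reachProb, if_neg h]
      exact ENNReal.tsum_le_tsum fun v' => mul_le_mul_right (ih v') _

lemma reachProb_mono' {V : Type*} [DecidableEq V] (P : V → PMF V) (verr : V)
    (v : V) : Monotone (fun n => reachProb P verr n v) :=
  monotone_nat_of_le_succ fun n => reachProb_mono P verr n v

lemma reachProb_pos {V : Type*} [DecidableEq V] (P : V → PMF V) (verr : V)
    (v : V) (h : Relation.ReflTransGen (fun a b => P a b ≠ 0) v verr) :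
    ∃ n, 0 < reachProb P verr n v := by
  induction h using Relation.ReflTransGen.head_induction_on with
  | refl => exact ⟨0, by simp [reachProb]⟩
  | head hac _ ih =>
    rename_i a c _
    obtain ⟨n, hn⟩ := ih
    refine ⟨n + 1, ?_⟩
    by_cases h : a = verr
    · simp [reachProb, h]
    · simp only [reachProb, if_neg h]
      calc (0 : ℝ≥0∞) < P a c * reachProb P verr n c :=
            ENNReal.mul_pos hac hn.ne'
      _ ≤ ∑' v', P a v' * reachProb P verr n v' := ENNReal.le_tsum c

theorem reach_absorbing_prob_one {V : Type*} [DecidableEq V] [Countable V]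
    (P : V → PMF V) (v₀ verr : V)
    (habs : P verr = PMF.pure verr)
    (hfin : {v | Relation.ReflTransGen (fun a b => P a b ≠ 0) v₀ v}.Finite)
    (hreach : ∀ v, Relation.ReflTransGen (fun a b => P a b ≠ 0) v₀ v →
      Relation.ReflTransGen (fun a b => P a b ≠ 0) v verr) :
    (⨆ n, reachProb P verr n v₀) = 1 := by
  classical
  set F : Finset V := hfin.toFinset with hF
  have hv₀ : v₀ ∈ F := by
    simp only [hF, Set.Finite.mem_toFinset, Set.mem_setOf_eq]
    exact Relation.ReflTransGen.refl
  have hmemF : ∀ v, v ∈ F ↔ Relation.ReflTransGen (fun a b => P a b ≠ 0) v₀ v := by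
    intro v; simp [hF, Set.Finite.mem_toFinset]
  have hcl : ∀ v ∈ F, ∀ v', P v v' ≠ 0 → v' ∈ F := by
    intro v hv v' hz
    rw [hmemF] at hv ⊢
    exact hv.tail hz
  have hpos : ∀ v ∈ F, ∃ n, 0 < reachProb P verr n v := by
    intro v hv
    exact reachProb_pos P verr v (hreach v ((hmemF v).1 hv))
  choose! f hf using hpos
  set N : ℕ := F.sup f with hN
  have hposN : ∀ v ∈ F, 0 < reachProb P verr N v := by
    intro v hv
    exact lt_of_lt_of_le (hf v hv) (reachProb_mono' P verr v (Finset.le_sup hv))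
  set A : ℝ≥0∞ := F.sup (failProb P verr N) with hA
  have hAle : ∀ v ∈ F, failProb P verr N v ≤ A := fun v hv => Finset.le_sup hv
  have hAlt : A < 1 := by
    rw [hA, Finset.sup_lt_iff (by norm_num : (⊥ : ℝ≥0∞) < 1)]
    intro v hv
    calc failProb P verr N v
        < failProb P verr N v + reachProb P verr N v :=
          ENNReal.lt_add_right
            (lt_of_le_of_lt (failProb_le_one P verr N v) ENNReal.one_lt_top).ne
            (hposN v hv).ne'
    _ = 1 := by rw [add_comm]; exact reach_add_fail P verr N v
  have key : ∀ n, ∀ v ∈ F, failProb P verr (n + N) v ≤ failProb P verr n v * A := by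
    intro n
    induction n with
    | zero =>
      intro v hv
      by_cases h : v = verr
      · simp [h, failProb_verr]
      · simpa [failProb, if_neg h] using hAle v hv
    | succ n ih =>
      intro v hv
      by_cases h : v = verr
      · simp [h, failProb_verr]
      · have hrw : n + 1 + N = (n + N) + 1 := by omega
        rw [hrw]
        simp only [failProb, if_neg h]
        rw [ENNReal.tsum_mul_right.symm]
        refine ENNReal.tsum_le_tsum fun v' => ?_
        by_cases hz : P v v' = 0
        · simp [hz]
        · rw [mul_assoc]
          exact mul_le_mul_right (ih v' (hcl v hv v' hz)) _
  have bound : ∀ k, failProb P verr (k * N) v₀ ≤ A ^ k := by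
    intro k
    induction k with
    | zero =>
      simpa using failProb_le_one P verr 0 v₀
    | succ k ih =>
      have : (k + 1) * N = k * N + N := by ring
      rw [this, pow_succ]
      calc failProb P verr (k * N + N) v₀ ≤ failProb P verr (k * N) v₀ * A :=
            key (k * N) v₀ hv₀
      _ ≤ A ^ k * A := mul_le_mul_left ih A
  refine le_antisymm (iSup_le fun n => reachProb_le_one P verr n v₀) ?_
  have h1 : ∀ k, (1 : ℝ≥0∞) ≤ (⨆ n, reachProb P verr n v₀) + A ^ k := by
    intro k
    calc (1 : ℝ≥0∞) = reachProb P verr (k * N) v₀ + failProb P verr (k * N) v₀ :=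
          (reach_add_fail P verr (k * N) v₀).symm
    _ ≤ (⨆ n, reachProb P verr n v₀) + A ^ k :=
          add_le_add (le_iSup (fun n => reachProb P verr n v₀) (k * N)) (bound k)
  have htend : Filter.Tendsto (fun k => (⨆ n, reachProb P verr n v₀) + A ^ k)
      Filter.atTop (nhds ((⨆ n, reachProb P verr n v₀) + 0)) :=
    Filter.Tendsto.const_add _ (ENNReal.tendsto_pow_atTop_nhds_zero_of_lt_one hAlt)
  have := ge_of_tendsto' htend h1
  simpa using this
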